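/- (Berhu penalty from the fused soft-ridge threshold) Let λ > 0 and M > 0, and define the thresholding rule Θ_B(t;λ,M) = 0 if |t| ≤ λ, Θ_B(t;λ,M) = t − λ·sgn(t) if λ < |t| < λ+M, and Θ_B(t;λ,M) = t/(1+λ/M) if |t| ≥ λ+M. Then for every θ ∈ ℝ, ∫₀^{|θ|} (sup{s : Θ_B(s;λ,M) ≤ u} − u) du equals λ|θ| if |θ| ≤ M, and equals λ(θ² + M²)/(2M) if |θ| > M. -/

import Mathlib

/-- The fused soft-ridge (Berhu-generating) thresholding rule `Θ_B(t;λ,M)`. -/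
noncomputable def thetaB (lam M t : ℝ) : ℝ :=
  if |t| ≤ lam then 0
  else if |t| < lam + M then t - lam * Real.sign t
  else t / (1 + lam / M)

lemma thetaB_isGreatest (lam M : ℝ) (hlam : 0 < lam) (hM : 0 < M) (u : ℝ) (hu : 0 ≤ u) :
    IsGreatest {s : ℝ | thetaB lam M s ≤ u}
      (if u ≤ M then u + lam else u * (1 + lam / M)) := by
  have hden : (0:ℝ) < 1 + lam / M := by positivity
  constructor
  · -- membership
    by_cases h1 : u ≤ M
    · simp only [if_pos h1, Set.mem_setOf_eq]
      rcases eq_or_lt_of_le hu with h0 | h0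
      · have : |(0:ℝ) + lam| ≤ lam := by
          rw [zero_add, abs_of_pos hlam]
        rw [← h0]
        unfold thetaB
        rw [if_pos this]
      · have hs : 0 < u + lam := by linarith
        have habs : |u + lam| = u + lam := abs_of_pos hs
        rcases eq_or_lt_of_le h1 with hM1 | hM1
        · -- u = M, third branch
          unfold thetaB
          rw [habs]
          rw [if_neg (by linarith), if_neg (by rw [hM1]; linarith)]
          rw [div_le_iff₀ hden]
          have hkey : M * (1 + lam / M) = M + lam := by field_simp
          rw [hM1, hkey]
        · unfold thetaB
          rw [habs, if_neg (by linarith), if_pos (by linarith),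
            Real.sign_of_pos hs]
          linarith
    · push_neg at h1
      simp only [if_neg (not_le.mpr h1), Set.mem_setOf_eq]
      set s := u * (1 + lam / M) with hsdef
      have hsM : lam + M < s := by
        have : s - (lam + M) = (u - M) * (M + lam) / M := by
          rw [hsdef]; field_simp; ring
        have hp := div_pos (mul_pos (sub_pos.mpr h1) (by linarith : (0:ℝ) < M + lam)) hM
        linarith
      have hspos : 0 < s := by linarith
      have habs : |s| = s := abs_of_pos hspos
      unfold thetaB
      rw [habs, if_neg (by linarith), if_neg (by linarith)]
      rw [hsdef, mul_div_assoc, div_self (ne_of_gt hden), mul_one]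
  · -- upper bound
    intro s hs
    simp only [Set.mem_setOf_eq] at hs
    by_contra hc
    push_neg at hc
    have hglam : lam < s := by
      by_cases h1 : u ≤ M
      · rw [if_pos h1] at hc; linarith
      · push_neg at h1
        rw [if_neg (not_le.mpr h1)] at hc
        have : lam < u * (1 + lam / M) := by
          have h2 : u * (1 + lam / M) = u + u * lam / M := by ring
          have h3 : lam < u * lam / M := by
            rw [lt_div_iff₀ hM]
            nlinarith
          nlinarith
        linarith
    have hspos : 0 < s := lt_trans hlam hglam
    have habs : |s| = s := abs_of_pos hspos
    unfold thetaB at hs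
    rw [habs, if_neg (not_le.mpr hglam)] at hs
    by_cases h2 : s < lam + M
    · rw [if_pos h2, Real.sign_of_pos hspos, mul_one] at hs
      by_cases h1 : u ≤ M
      · rw [if_pos h1] at hc; linarith
      · push_neg at h1
        rw [if_neg (not_le.mpr h1)] at hc
        have : lam + M < u * (1 + lam / M) := by
          have h3 : u * (1 + lam / M) - (lam + M) = (u - M) * (M + lam) / M := by
            field_simp; ring
          nlinarith [div_pos (mul_pos (sub_pos.mpr h1) (by linarith : (0:ℝ) < M + lam)) hM]
        linarith
    · rw [if_neg h2] at hs
      rw [div_le_iff₀ hden] at hs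
      by_cases h1 : u ≤ M
      · rw [if_pos h1] at hc
        have : u * (1 + lam / M) ≤ u + lam := by
          have : u * (1 + lam / M) = u + u * lam / M := by ring
          rw [this]
          have : u * lam / M ≤ lam := by
            rw [div_le_iff₀ hM]
            nlinarith
          linarith
        linarith
      · rw [if_neg h1] at hc
        linarith

lemma thetaB_sSup (lam M : ℝ) (hlam : 0 < lam) (hM : 0 < M) (u : ℝ) (hu : 0 ≤ u) :
    sSup {s : ℝ | thetaB lam M s ≤ u} = if u ≤ M then u + lam else u * (1 + lam / M) :=
  (thetaB_isGreatest lam M hlam hM u hu).csSup_eq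

/-- The penalty constructed from `Θ_B` via `P(θ;λ) = ∫₀^{|θ|} (sup{s : Θ(s;λ) ≤ u} − u) du`
is the Berhu penalty: `λ|θ|` for `|θ| ≤ M` and `λ(θ² + M²)/(2M)` for `|θ| > M`. -/
theorem berhu_penalty_from_threshold (lam M : ℝ) (hlam : 0 < lam) (hM : 0 < M) (θ : ℝ) :
    (∫ u in (0:ℝ)..|θ|, (sSup {s : ℝ | thetaB lam M s ≤ u} - u))
      = if |θ| ≤ M then lam * |θ| else lam * (θ ^ 2 + M ^ 2) / (2 * M) := by
  have habs : (0:ℝ) ≤ |θ| := abs_nonneg θ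
  set F : ℝ → ℝ := fun u => if u ≤ M then lam else lam * u / M with hF
  have hmono : Monotone F := by
    intro a b hab
    simp only [hF]
    by_cases hb : b ≤ M
    · rw [if_pos (le_trans hab hb), if_pos hb]
    · rw [if_neg hb]
      push_neg at hb
      by_cases ha : a ≤ M
      · rw [if_pos ha]
        rw [le_div_iff₀ hM]
        nlinarith
      · rw [if_neg ha]
        push_neg at ha
        exact div_le_div_of_nonneg_right (by nlinarith) hM.le
  have hint : ∀ a b : ℝ, IntervalIntegrable F MeasureTheory.volume a b := fun a b =>
    hmono.intervalIntegrable
  have hcongr : ∫ u in (0:ℝ)..|θ|, (sSup {s : ℝ | thetaB lam M s ≤ u} - u)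
      = ∫ u in (0:ℝ)..|θ|, F u := by
    apply intervalIntegral.integral_congr
    intro u hu
    rw [Set.uIcc_of_le habs] at hu
    have hu0 : 0 ≤ u := hu.1
    show sSup {s : ℝ | thetaB lam M s ≤ u} - u = F u
    rw [thetaB_sSup lam M hlam hM u hu0]
    simp only [hF]
    by_cases h1 : u ≤ M
    · rw [if_pos h1, if_pos h1]; ring
    · rw [if_neg h1, if_neg h1]
      field_simp
      ring
  rw [hcongr]
  by_cases hθ : |θ| ≤ M
  · rw [if_pos hθ]
    have : ∫ u in (0:ℝ)..|θ|, F u = ∫ u in (0:ℝ)..|θ|, lam := by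
      apply intervalIntegral.integral_congr
      intro u hu
      rw [Set.uIcc_of_le habs] at hu
      show F u = lam
      simp only [hF]
      rw [if_pos (le_trans hu.2 hθ)]
    rw [this, intervalIntegral.integral_const]
    simp [mul_comm]
  · rw [if_neg hθ]
    push_neg at hθ
    have hsplit : ∫ u in (0:ℝ)..|θ|, F u
        = (∫ u in (0:ℝ)..M, F u) + ∫ u in M..|θ|, F u :=
      (intervalIntegral.integral_add_adjacent_intervals (hint 0 M) (hint M |θ|)).symm
    have h1 : ∫ u in (0:ℝ)..M, F u = lam * M := by
      have : ∫ u in (0:ℝ)..M, F u = ∫ u in (0:ℝ)..M, lam := by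
        apply intervalIntegral.integral_congr
        intro u hu
        rw [Set.uIcc_of_le hM.le] at hu
        show F u = lam
        simp only [hF]
        rw [if_pos hu.2]
      rw [this, intervalIntegral.integral_const]
      simp [mul_comm]
    have h2 : ∫ u in M..|θ|, F u = lam / M * ((|θ|)^2 - M^2) / 2 := by
      have he : ∫ u in M..|θ|, F u = ∫ u in M..|θ|, (lam / M) * u := by
        apply intervalIntegral.integral_congr
        intro u hu
        rw [Set.uIcc_of_le hθ.le] at hu
        show F u = lam / M * u
        simp only [hF]
        rcases eq_or_lt_of_le hu.1 with h | h
        · rw [if_pos (le_of_eq h.symm), ← h]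
          field_simp
        · rw [if_neg (not_le.mpr h)]
          ring
      rw [he, intervalIntegral.integral_const_mul, integral_id]
      ring
    rw [hsplit, h1, h2, sq_abs]
    field_simp
    ring
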